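/- For every simple signed graph G there exists a simple signed graph G' on the same underlying graph, obtained by changing some positive edges into negative edges, such that fix(G) ≤ fix(G') and the set of positive edges of G' forms a matching. -/

import Mathlib

/-- `S` is a fixed set of the conjunctive network with positive edges `pos`,
negative edges `neg`. -/
def IsFixedSet {V : Type*} (pos neg : V → V → Prop) (S : Set V) : Prop :=
  ∀ v, v ∈ S ↔ (∀ u, pos u v → u ∈ S) ∧ (∀ u, neg u v → u ∉ S)

/-- Number of fixed points of the conjunctive network. -/
noncomputable def fixc {V : Type*} (pos neg : V → V → Prop) : ℕ :=
  Set.ncard {S : Set V | IsFixedSet pos neg S}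

namespace Stmt9Aux

variable {V : Type*}

/-- Characterization of fixed sets. -/
lemma fixed_iff (p n : V → V → Prop) (hp : Symmetric p) (S : Set V) :
    IsFixedSet p n S ↔
      (∀ u v, p u v → (u ∈ S ↔ v ∈ S)) ∧
      (∀ u v, n u v → ¬(u ∈ S ∧ v ∈ S)) ∧
      (∀ v, v ∉ S → (∃ u, p u v) ∨ (∃ u, n u v ∧ u ∈ S)) := by
  constructor
  · intro h
    refine ⟨?_, ?_, ?_⟩
    · intro u v huv
      exact ⟨fun hu => ((h u).mp hu).1 v (hp huv), fun hv => ((h v).mp hv).1 u huv⟩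
    · rintro u v huv ⟨hu, hv⟩
      exact ((h v).mp hv).2 u huv hu
    · intro v hv
      by_contra hc
      push_neg at hc
      exact hv ((h v).mpr ⟨fun u hu => absurd hu (hc.1 u), hc.2⟩)
  · rintro ⟨h1, h2, h3⟩ v
    constructor
    · intro hv
      exact ⟨fun u hu => (h1 u v hu).mpr hv, fun u hu huS => h2 u v hu ⟨huS, hv⟩⟩
    · rintro ⟨hp', hn'⟩
      by_contra hv
      rcases h3 v hv with ⟨u, hu⟩ | ⟨u, hu, huS⟩
      · exact hv ((h1 u v hu).mp (hp' u hu))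
      · exact hn' u hu huS

/-- Closure under reflexive-transitive closure. -/
lemma closed_r {p : V → V → Prop} {S : Set V}
    (h1 : ∀ u v, p u v → (u ∈ S ↔ v ∈ S)) {u v : V}
    (h : Relation.ReflTransGen p u v) : u ∈ S ↔ v ∈ S := by
  induction h with
  | refl => exact Iff.rfl
  | tail _ h2 ih => exact ih.trans (h1 _ _ h2)

variable [Nonempty V] (pos neg : V → V → Prop)

/-- For each vertex, a chosen positive edge in its positive connected component. -/
noncomputable def sel (u : V) : V × V :=
  Classical.epsilon (fun p : V × V => pos p.1 p.2 ∧ Relation.ReflTransGen pos p.1 u)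

/-- The chosen matching: `u v` is a positive edge which is the chosen edge of
the component of `u`. -/
def Pos' (u v : V) : Prop :=
  pos u v ∧ ((u = (sel pos u).1 ∧ v = (sel pos u).2) ∨
             (u = (sel pos u).2 ∧ v = (sel pos u).1))

/-- The new negative edges. -/
def Neg' (u v : V) : Prop := neg u v ∨ (pos u v ∧ ¬ Pos' pos u v)

variable {pos neg}
variable (hps : Symmetric pos) (hns : Symmetric neg)
    (hpi : ∀ v, ¬ pos v v) (hni : ∀ v, ¬ neg v v)

section
include hps

lemma sel_eq_of_pos {u v : V} (h : pos u v) : sel pos u = sel pos v := by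
  have hPQ : (fun p : V × V => pos p.1 p.2 ∧ Relation.ReflTransGen pos p.1 u)
      = (fun p : V × V => pos p.1 p.2 ∧ Relation.ReflTransGen pos p.1 v) := by
    funext p
    exact propext (and_congr_right fun _ =>
      ⟨fun hr => hr.tail h, fun hr => hr.tail (hps h)⟩)
  simp only [sel, hPQ]

lemma sel_eq_of_r {u v : V} (h : Relation.ReflTransGen pos u v) :
    sel pos u = sel pos v := by
  induction h with
  | refl => rfl
  | tail _ h2 ih => exact ih.trans (sel_eq_of_pos hps h2)

lemma sel_spec {u : V} (h : ∃ w, pos w u) :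
    pos (sel pos u).1 (sel pos u).2 ∧ Relation.ReflTransGen pos (sel pos u).1 u := by
  obtain ⟨w, hw⟩ := h
  exact Classical.epsilon_spec
    (p := fun p : V × V => pos p.1 p.2 ∧ Relation.ReflTransGen pos p.1 u)
    ⟨(w, u), hw, Relation.ReflTransGen.single hw⟩

lemma pos'_symm {u v : V} (h : Pos' pos u v) : Pos' pos v u := by
  obtain ⟨h1, h2⟩ := h
  have e := sel_eq_of_pos hps h1
  refine ⟨hps h1, ?_⟩
  rw [← e]
  rcases h2 with ⟨ha, hb⟩ | ⟨ha, hb⟩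
  · exact Or.inr ⟨hb, ha⟩
  · exact Or.inl ⟨hb, ha⟩

lemma neg'_symm (hns : Symmetric neg) {u v : V} (h : Neg' pos neg u v) :
    Neg' pos neg v u := by
  rcases h with h | ⟨h1, h2⟩
  · exact Or.inl (hns h)
  · exact Or.inr ⟨hps h1, fun hc => h2 (pos'_symm hps hc)⟩

include hpi

lemma pos'_matching {u v w : V} (h1 : Pos' pos u v) (h2 : Pos' pos u w) : v = w := by
  have hne : (sel pos u).1 ≠ (sel pos u).2 := by
    intro e
    have hs := sel_spec (pos := pos) hps (u := u) ⟨v, hps h1.1⟩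
    rw [e] at hs
    exact hpi _ hs.1
  rcases h1.2 with ⟨a1, b1⟩ | ⟨a1, b1⟩ <;> rcases h2.2 with ⟨a2, b2⟩ | ⟨a2, b2⟩
  · rw [b1, b2]
  · exact absurd (a1.symm.trans a2) hne
  · exact absurd (a2.symm.trans a1) hne
  · rw [b1, b2]

lemma pair_pos' {u v : V} (h : pos u v)
    (hu : u = (sel pos u).1 ∨ u = (sel pos u).2)
    (hv : v = (sel pos v).1 ∨ v = (sel pos v).2) : Pos' pos u v := by
  have e : sel pos v = sel pos u := (sel_eq_of_pos hps h).symm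
  have hne : u ≠ v := fun e' => hpi u (e' ▸ h)
  rw [e] at hv
  refine ⟨h, ?_⟩
  rcases hu with hu | hu <;> rcases hv with hv | hv
  · exact absurd (hu.trans hv.symm) hne
  · exact Or.inl ⟨hu, hv⟩
  · exact Or.inr ⟨hu, hv⟩
  · exact absurd (hu.trans hv.symm) hne

omit hpi

lemma partner {u : V} (hu : u = (sel pos u).1 ∨ u = (sel pos u).2)
    (hm : ∃ w, pos w u) : ∃ w, Pos' pos u w := by
  have hs := sel_spec hps hm
  rcases hu with h | h
  · exact ⟨(sel pos u).2, by rw [← h] at hs; exact hs.1, Or.inl ⟨h, rfl⟩⟩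
  · exact ⟨(sel pos u).1, by rw [← h] at hs; exact hps hs.1, Or.inr ⟨h, rfl⟩⟩

end

variable (pos neg) in
/-- The "signature" set of `S`: pair-vertices together with positively isolated
vertices having no negative neighbour in `S`. -/
def Zs (S : Set V) : Set V :=
  {v | ((∃ w, pos w v) ∧ (v = (sel pos v).1 ∨ v = (sel pos v).2)) ∨
       ((¬ ∃ w, pos w v) ∧ ∀ x, neg x v → x ∉ S)}

variable [Fintype V]

section
include hps hns hpi hni

lemma exists_T {S : Set V} (hS : IsFixedSet pos neg S) :
    ∃ T, IsFixedSet (Pos' pos) (Neg' pos neg) T ∧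
      T ∩ Zs pos neg S = S ∩ Zs pos neg S := by
  obtain ⟨c1, c2, c3⟩ := (fixed_iff pos neg hps S).mp hS
  set Z := Zs pos neg S with hZdef
  set F : Set (Set V) := {T | (∀ u v, Pos' pos u v → (u ∈ T ↔ v ∈ T)) ∧
      (∀ u v, Neg' pos neg u v → ¬(u ∈ T ∧ v ∈ T)) ∧ T ∩ Z = S ∩ Z} with hFdef
  have hbase : (S ∩ Z) ∈ F := by
    refine ⟨?_, ?_, ?_⟩
    · intro u v huv
      have hp := huv.1
      have huZ : u ∈ Z := Or.inl ⟨⟨v, hps hp⟩, by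
        rcases huv.2 with ⟨h, _⟩ | ⟨h, _⟩
        · exact Or.inl h
        · exact Or.inr h⟩
      have hvZ : v ∈ Z := by
        have e : sel pos v = sel pos u := (sel_eq_of_pos hps hp).symm
        refine Or.inl ⟨⟨u, hp⟩, ?_⟩
        rw [e]
        rcases huv.2 with ⟨_, h⟩ | ⟨_, h⟩
        · exact Or.inr h
        · exact Or.inl h
      exact ⟨fun ⟨hS', _⟩ => ⟨(c1 u v hp).mp hS', hvZ⟩,
             fun ⟨hS', _⟩ => ⟨(c1 u v hp).mpr hS', huZ⟩⟩
    · rintro u v (hn | ⟨hp, hnp⟩) ⟨⟨huS, huZ⟩, ⟨hvS, hvZ⟩⟩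
      · exact c2 u v hn ⟨huS, hvS⟩
      · have hu' : u = (sel pos u).1 ∨ u = (sel pos u).2 := by
          rcases huZ with ⟨_, h⟩ | ⟨h, _⟩
          · exact h
          · exact absurd ⟨v, hps hp⟩ h
        have hv' : v = (sel pos v).1 ∨ v = (sel pos v).2 := by
          rcases hvZ with ⟨_, h⟩ | ⟨h, _⟩
          · exact h
          · exact absurd ⟨u, hp⟩ h
        exact hnp (pair_pos' hps hpi hp hu' hv')
    · rw [Set.inter_assoc, Set.inter_self]
  have hfin : F.Finite := by
    have : Finite V := Finite.of_fintype V
    exact Set.toFinite F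
  obtain ⟨T, hTF, hTmax0⟩ := Set.Finite.exists_maximal hfin ⟨S ∩ Z, hbase⟩
  have hTmax : ∀ T' ∈ F, id T ≤ id T' → id T = id T' :=
    fun T' hT' hle => le_antisymm hle (hTmax0 hT' hle)
  have hsym' : Symmetric (Pos' pos) := fun u v h => pos'_symm hps h
  refine ⟨T, ?_, hTF.2.2⟩
  rw [fixed_iff _ _ hsym']
  refine ⟨hTF.1, hTF.2.1, ?_⟩
  intro v hv
  by_contra hc
  push_neg at hc
  have hvZ : v ∉ Z := by
    intro hvZ
    rcases hvZ with ⟨hm, hpv⟩ | ⟨hm, hdom⟩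
    · obtain ⟨w, hw⟩ := partner hps hpv hm
      exact hc.1 w (pos'_symm hps hw)
    · by_cases hvS : v ∈ S
      · have hvT : v ∈ T := by
          have hmem : v ∈ S ∩ Z := ⟨hvS, Or.inr ⟨hm, hdom⟩⟩
          rw [← hTF.2.2] at hmem
          exact hmem.1
        exact hv hvT
      · rcases c3 v hvS with ⟨u, hu⟩ | ⟨u, hu, huS⟩
        · exact hm ⟨u, hu⟩
        · exact hdom u hu huS
  have hins : insert v T ∈ F := by
    refine ⟨?_, ?_, ?_⟩
    · intro a b hab
      have ha : ¬(a = v) := fun e => hc.1 b (pos'_symm hps (e ▸ hab))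
      have hb : ¬(b = v) := fun e => hc.1 a (e ▸ hab)
      simp only [Set.mem_insert_iff, ha, hb, false_or]
      exact hTF.1 a b hab
    · rintro a b hab ⟨haI, hbI⟩
      rcases Set.mem_insert_iff.mp haI with rfl | haT
      · rcases Set.mem_insert_iff.mp hbI with rfl | hbT
        · rcases hab with h | ⟨h, _⟩
          · exact hni _ h
          · exact hpi _ h
        · exact hc.2 b (neg'_symm hps hns hab) hbT
      · rcases Set.mem_insert_iff.mp hbI with rfl | hbT
        · exact hc.2 a hab haT
        · exact hTF.2.1 a b hab ⟨haT, hbT⟩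
    · rw [Set.insert_inter_of_notMem hvZ]
      exact hTF.2.2
  have heq : id T = id (insert v T) := hTmax (insert v T) hins (Set.subset_insert v T)
  have hvT : v ∈ T := by
    show v ∈ id T
    rw [heq]
    exact Set.mem_insert v T
  exact hv hvT

lemma recovery {S : Set V} (hS : IsFixedSet pos neg S) (T : Set V)
    (hT : IsFixedSet (Pos' pos) (Neg' pos neg) T)
    (htr : T ∩ Zs pos neg S = S ∩ Zs pos neg S) :
    ∀ v, v ∈ S ↔
      (((∃ w, pos w v) ∧ (sel pos v).1 ∈ T) ∨
       ((¬ ∃ w, pos w v) ∧ v ∈ T ∧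
          ∀ x, neg x v → ¬((∃ w, pos w x) ∧ (sel pos x).1 ∈ T))) := by
  obtain ⟨c1, c2, c3⟩ := (fixed_iff pos neg hps S).mp hS
  have hsym' : Symmetric (Pos' pos) := fun u v h => pos'_symm hps h
  obtain ⟨d1, d2, d3⟩ := (fixed_iff _ _ hsym' T).mp hT
  have key : ∀ v, (∃ w, pos w v) → (v ∈ S ↔ (sel pos v).1 ∈ T) := by
    intro v hm
    obtain ⟨hab, hRav⟩ := sel_spec hps hm
    have ham : ∃ w, pos w (sel pos v).1 := ⟨(sel pos v).2, hps hab⟩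
    have hsel_av : sel pos (sel pos v).1 = sel pos v := sel_eq_of_r hps hRav
    have haZ : (sel pos v).1 ∈ Zs pos neg S :=
      Or.inl ⟨ham, Or.inl (by rw [hsel_av])⟩
    have hSa : v ∈ S ↔ (sel pos v).1 ∈ S := (closed_r c1 hRav).symm
    have hST : (sel pos v).1 ∈ S ↔ (sel pos v).1 ∈ T := by
      constructor
      · intro h
        have hmem : (sel pos v).1 ∈ S ∩ Zs pos neg S := ⟨h, haZ⟩
        rw [← htr] at hmem
        exact hmem.1
      · intro h
        have hmem : (sel pos v).1 ∈ T ∩ Zs pos neg S := ⟨h, haZ⟩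
        rw [htr] at hmem
        exact hmem.1
    exact hSa.trans hST
  intro v
  by_cases hm : ∃ w, pos w v
  · constructor
    · intro hv
      exact Or.inl ⟨hm, (key v hm).mp hv⟩
    · rintro (⟨_, h⟩ | ⟨hnm, _⟩)
      · exact (key v hm).mpr h
      · exact absurd hm hnm
  · constructor
    · intro hv
      refine Or.inr ⟨hm, ?_, ?_⟩
      · have hvZ : v ∈ Zs pos neg S :=
          Or.inr ⟨hm, fun x hx hxS => c2 x v hx ⟨hxS, hv⟩⟩
        have hmem : v ∈ S ∩ Zs pos neg S := ⟨hv, hvZ⟩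
        rw [← htr] at hmem
        exact hmem.1
      · rintro x hx ⟨hxm, hxT⟩
        exact c2 x v hx ⟨(key x hxm).mpr hxT, hv⟩
    · rintro (⟨hm', _⟩ | ⟨_, hvT, hdom⟩)
      · exact absurd hm' hm
      · by_contra hvS
        rcases c3 v hvS with ⟨u, hu⟩ | ⟨x, hx, hxS⟩
        · exact hm ⟨u, hu⟩
        · by_cases hxm : ∃ w, pos w x
          · exact hdom x hx ⟨hxm, (key x hxm).mp hxS⟩
          · have hxZ : x ∈ Zs pos neg S :=
              Or.inr ⟨hxm, fun y hy hyS => c2 y x hy ⟨hyS, hxS⟩⟩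
            have hxT : x ∈ T := by
              have hmem : x ∈ S ∩ Zs pos neg S := ⟨hxS, hxZ⟩
              rw [← htr] at hmem
              exact hmem.1
            exact d2 x v (Or.inl hx) ⟨hxT, hvT⟩

lemma main_ineq : fixc pos neg ≤ fixc (Pos' pos) (Neg' pos neg) := by
  classical
  haveI : Nonempty (Set V) := ⟨∅⟩
  set f : Set V → Set V := fun S => Classical.epsilon
    (fun T => IsFixedSet (Pos' pos) (Neg' pos neg) T ∧
      T ∩ Zs pos neg S = S ∩ Zs pos neg S) with hfdef
  have hspec : ∀ S, IsFixedSet pos neg S →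
      IsFixedSet (Pos' pos) (Neg' pos neg) (f S) ∧
        f S ∩ Zs pos neg S = S ∩ Zs pos neg S := by
    intro S hS
    exact Classical.epsilon_spec (exists_T hps hns hpi hni hS)
  show Set.ncard _ ≤ Set.ncard _
  apply Set.ncard_le_ncard_of_injOn f
  · intro S hS
    exact (hspec S hS).1
  · intro S1 h1 S2 h2 heq
    have r1 := recovery hps hns hpi hni h1 (f S1) (hspec S1 h1).1 (hspec S1 h1).2
    have r2 := recovery hps hns hpi hni h2 (f S2) (hspec S2 h2).1 (hspec S2 h2).2
    ext v
    rw [r1 v, r2 v, heq]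

end

end Stmt9Aux

/-- For every simple signed graph `(pos, neg)` there is a simple signed graph on the
same underlying graph, obtained by turning some positive edges negative, with at least
as many fixed points and whose positive edges form a matching. -/
theorem stmt9 {V : Type*} [Fintype V] (pos neg : V → V → Prop)
    (hps : Symmetric pos) (hns : Symmetric neg)
    (hpi : ∀ v, ¬ pos v v) (hni : ∀ v, ¬ neg v v)
    (hd : ∀ u v, pos u v → ¬ neg u v) :
    ∃ pos' : V → V → Prop, (∀ u v, pos' u v → pos u v) ∧ Symmetric pos' ∧
      (∀ u v w, pos' u v → pos' u w → v = w) ∧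
      fixc pos neg ≤ fixc pos' (fun u v => neg u v ∨ (pos u v ∧ ¬ pos' u v)) := by
  classical
  rcases isEmpty_or_nonempty V with hV | hV
  · refine ⟨fun _ _ => False, fun u => isEmptyElim u, fun u => isEmptyElim u,
      fun u => isEmptyElim u, ?_⟩
    have huniv : ∀ (p n : V → V → Prop), {S : Set V | IsFixedSet p n S} = Set.univ := by
      intro p n
      ext S
      simp only [Set.mem_setOf_eq, Set.mem_univ, iff_true]
      intro v
      exact isEmptyElim v
    simp only [fixc, huniv]
    exact le_rfl
  · refine ⟨Stmt9Aux.Pos' pos, fun u v h => h.1,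
      fun u v h => Stmt9Aux.pos'_symm hps h,
      fun u v w h1 h2 => Stmt9Aux.pos'_matching hps hpi h1 h2, ?_⟩
    exact Stmt9Aux.main_ineq hps hns hpi hni
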